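/- Let p be a prime and n, e positive integers. Then the maximum order of an automorphism of (Z/p^eZ)^n is at most p^(e-1)·(p^n - 1). In particular, if n ≥ 2 and e ≥ 2, then every automorphism of (Z/p^eZ)^n has order strictly less than half the group order, so λ((Z/p^eZ)^n) < 1/2. -/

import Mathlib

/-- The largest cycle length ("Λ-value") of a self-map of a set. -/
noncomputable def maxCycleLen {X : Type*} (f : X → X) : ℕ :=
  sSup (Set.range fun x => Function.minimalPeriod f x)

private lemma aux_one_add_pow {T : Type*} [CommRing T] (p : ℕ) (j : ℕ) (hj : 1 ≤ j) (x : T) :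
    ((p : T) ^ (j + 1)) ∣ ((1 + (p : T) ^ j * x) ^ p - 1) := by
  rw [add_comm (1:T) ((p:T)^j*x), add_pow]
  simp only [one_pow, mul_one]
  rw [Finset.sum_range_succ']
  simp only [pow_zero, Nat.choose_zero_right, Nat.cast_one, one_mul, add_sub_cancel_right]
  apply Finset.dvd_sum
  intro i _
  rcases Nat.eq_zero_or_pos i with rfl | hi
  · rw [zero_add, pow_one, Nat.choose_one_right]
    exact ⟨x, by ring⟩
  · have h1 : ((p:T) ^ (j + 1)) ∣ ((p:T) ^ j * x) ^ (i + 1) := by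
      rw [mul_pow, ← pow_mul]
      exact Dvd.dvd.mul_right (pow_dvd_pow _ (by nlinarith)) _
    exact h1.mul_right _

private lemma aux_pow_pow {T : Type*} [CommRing T] (p e : ℕ) (hT : (p:T)^e = 0) (he : 0 < e)
    (x : T) : (1 + (p:T) * x) ^ (p ^ (e-1)) = 1 := by
  have key : ∀ i : ℕ, ∃ c : T, (1 + (p:T) * x) ^ (p ^ i) = 1 + (p:T)^(i+1) * c := by
    intro i; induction i with
    | zero => exact ⟨x, by simp⟩
    | succ i ih =>
      obtain ⟨c, hc⟩ := ih
      obtain ⟨d, hd⟩ := aux_one_add_pow p (i+1) (by omega) c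
      refine ⟨d, ?_⟩
      rw [pow_succ, pow_mul, hc]
      linear_combination hd
  obtain ⟨c, hc⟩ := key (e-1)
  rw [hc, show e - 1 + 1 = e from by omega, hT, zero_mul, add_zero]

open Matrix Polynomial in
private lemma aux_order_le {p n : ℕ} [Fact p.Prime] (hn : 0 < n)
    (u : (Matrix (Fin n) (Fin n) (ZMod p))ˣ) : orderOf u + 1 ≤ p ^ n := by
  haveI : NeZero p := ⟨(Fact.out : p.Prime).pos.ne'⟩
  haveI : Nonempty (Fin n) := ⟨⟨0, hn⟩⟩
  set F := ZMod p
  set A : Matrix (Fin n) (Fin n) F := (u : Matrix (Fin n) (Fin n) F) with hA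
  set s : Finset (Matrix (Fin n) (Fin n) F) :=
    Finset.image (fun i : Fin n => A ^ (i : ℕ)) Finset.univ with hs
  set W : Submodule F (Matrix (Fin n) (Fin n) F) := Submodule.span F (s : Set _) with hW
  have hmem : ∀ k : ℕ, A ^ k ∈ W := by
    intro k
    induction k using Nat.strong_induction_on with
    | _ k ih =>
      rcases lt_or_ge k n with hk | hk
      · exact Submodule.subset_span (by
          simp only [hs, Finset.coe_image, Finset.coe_univ, Set.image_univ]
          exact ⟨⟨k, hk⟩, rfl⟩)
      · have hchar := Matrix.aeval_self_charpoly A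
        have hdeg : (Matrix.charpoly A).natDegree = n :=
          (Matrix.charpoly_natDegree_eq_dim A).trans (Fintype.card_fin n)
        rw [Polynomial.aeval_eq_sum_range, hdeg, Finset.sum_range_succ] at hchar
        have hlead := (Matrix.charpoly_monic A).coeff_natDegree
        rw [hdeg] at hlead
        rw [hlead, one_smul] at hchar
        have hAn : A ^ n = -∑ i ∈ Finset.range n, (Matrix.charpoly A).coeff i • A ^ i := by
          rwa [add_comm, add_eq_zero_iff_eq_neg] at hchar
        have hk' : A ^ k =
            -∑ i ∈ Finset.range n, (Matrix.charpoly A).coeff i • A ^ (k - n + i) := by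
          have hk2 : A ^ k = A ^ (k - n) * A ^ n := by rw [← pow_add]; congr 1; omega
          rw [hk2, hAn, mul_neg, Finset.mul_sum]
          congr 1
          refine Finset.sum_congr rfl fun i _ => ?_
          rw [mul_smul_comm, ← pow_add]
        rw [hk']
        refine Submodule.neg_mem _ (Submodule.sum_mem _ fun i hi => ?_)
        exact Submodule.smul_mem _ _ (ih _ (by
          have := Finset.mem_range.mp hi; omega))
  haveI : Fintype W := Fintype.ofFinite W
  have hcardW : Fintype.card W ≤ p ^ n := by
    have h1 : Module.finrank F W ≤ n := by
      refine le_trans (finrank_span_finset_le_card s) ?_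
      exact le_trans (Finset.card_image_le) (by simp)
    calc Fintype.card W = Fintype.card F ^ Module.finrank F W := Module.card_eq_pow_finrank
      _ ≤ Fintype.card F ^ n := Nat.pow_le_pow_right (Fintype.card_pos) h1
      _ = p ^ n := by rw [ZMod.card]
  have hinj : Function.Injective
      (fun o : Option (Fin (orderOf u)) =>
        Option.elim o (⟨0, W.zero_mem⟩ : W) (fun i => ⟨A ^ (i : ℕ), hmem i⟩)) := by
    have hne : ∀ j : ℕ, A ^ j ≠ 0 := by
      intro j h
      exact ((u ^ j).isUnit.ne_zero) (by rw [← h, Units.val_pow_eq_pow_val])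
    rintro (_ | i) (_ | j) h
    · rfl
    · exact absurd (congrArg Subtype.val h).symm (hne j)
    · exact absurd (congrArg Subtype.val h) (hne i)
    · have h2 : A ^ (i : ℕ) = A ^ (j : ℕ) := congrArg Subtype.val h
      have h3 : u ^ (i : ℕ) = u ^ (j : ℕ) := by
        apply Units.ext
        rwa [Units.val_pow_eq_pow_val, Units.val_pow_eq_pow_val]
      have := pow_injOn_Iio_orderOf (x := u) i.isLt j.isLt h3
      simp [Fin.ext this]
  calc orderOf u + 1 = Fintype.card (Option (Fin (orderOf u))) := by simp
    _ ≤ Fintype.card W := Fintype.card_le_of_injective _ hinj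
    _ ≤ p ^ n := hcardW

/-- The maximum automorphism order of `(ℤ/p^eℤ)^n` is at most
`p^(e-1)·(p^n - 1)`; in particular for `n, e ≥ 2` every automorphism has
`λ`-value less than `1/2`. -/
theorem stmt11 (p n e : ℕ) (hp : p.Prime) (hn : 0 < n) (he : 0 < e) :
    (∀ α : AddAut (Fin n → ZMod (p ^ e)), addOrderOf α ≤ p ^ (e - 1) * (p ^ n - 1)) ∧
    (2 ≤ n → 2 ≤ e →
      ∀ α : AddAut (Fin n → ZMod (p ^ e)),
        (maxCycleLen (α : (Fin n → ZMod (p ^ e)) → (Fin n → ZMod (p ^ e))) : ℚ) /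
          Nat.card (Fin n → ZMod (p ^ e)) < 1 / 2) := by
  haveI hfp : Fact p.Prime := ⟨hp⟩
  haveI : NeZero p := ⟨hp.pos.ne'⟩
  haveI : NeZero (p ^ e) := ⟨pow_ne_zero e hp.pos.ne'⟩
  haveI : Fact (1 < p ^ e) := ⟨Nat.one_lt_pow he.ne' hp.one_lt⟩
  haveI : Nonempty (Fin n) := ⟨⟨0, hn⟩⟩
  set R := ZMod (p ^ e) with hR
  -- the monoid hom from automorphisms to matrices
  let L : AddAut (Fin n → R) → ((Fin n → R) →ₗ[R] (Fin n → R)) := fun a =>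
    AddMonoidHom.toZModLinearMap (p ^ e) a.toAddMonoidHom
  let toM : Multiplicative (AddAut (Fin n → R)) →* Matrix (Fin n) (Fin n) R :=
  { toFun := fun a => LinearMap.toMatrixAlgEquiv' (L (Multiplicative.toAdd a))
    map_one' := by
      show LinearMap.toMatrixAlgEquiv' (L (Multiplicative.toAdd 1)) = 1
      have h1 : L (Multiplicative.toAdd 1) = (1 : (Fin n → R) →ₗ[R] (Fin n → R)) := LinearMap.ext fun x => rfl
      rw [h1, map_one]
    map_mul' := fun a b => by
      show LinearMap.toMatrixAlgEquiv' (L (Multiplicative.toAdd (a * b))) =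
        LinearMap.toMatrixAlgEquiv' (L (Multiplicative.toAdd a)) *
          LinearMap.toMatrixAlgEquiv' (L (Multiplicative.toAdd b))
      have h1 : L (Multiplicative.toAdd (a * b)) =
          L (Multiplicative.toAdd a) * L (Multiplicative.toAdd b) := LinearMap.ext fun x => rfl
      rw [h1, map_mul] }
  have htoM : Function.Injective toM := by
    intro a b h
    have h2 := LinearMap.toMatrixAlgEquiv'.injective h
    have h3 := AddMonoidHom.toZModLinearMap_injective (p ^ e) h2
    exact Multiplicative.toAdd.injective (AddEquiv.ext fun x => DFunLike.congr_fun h3 x)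
  have hdvd : p ∣ p ^ e := dvd_pow_self p he.ne'
  have main : ∀ α : AddAut (Fin n → ZMod (p ^ e)), addOrderOf α ≤ p ^ (e - 1) * (p ^ n - 1) := by
    intro α0
    rw [← orderOf_ofAdd_eq_addOrderOf]
    set α := Multiplicative.ofAdd α0 with hα
    set f := ZMod.castHom hdvd (ZMod p) with hf
    set φ := f.mapMatrix (m := Fin n) with hφ
    set u := toM.toHomUnits α with hu
    set ub := Units.map φ.toMonoidHom u with hubar
    set m := orderOf ub with hm
    have hmle : m + 1 ≤ p ^ n := aux_order_le hn ub
    have hmpos : 0 < m := orderOf_pos ub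
    have huval : (u : Matrix (Fin n) (Fin n) R) = toM α := rfl
    -- φ ((toM α)^m) = 1
    have h1 : φ ((toM α) ^ m) = 1 := by
      have h := congrArg Units.val (pow_orderOf_eq_one ub)
      rw [Units.val_pow_eq_pow_val, Units.val_one] at h
      rw [map_pow]
      exact h
    -- entrywise divisibility
    have h2 : ∀ i j : Fin n, ∃ b : R,
        ((toM α) ^ m - 1) i j = (p : R) * b := by
      intro i j
      have h3 : φ ((toM α) ^ m - 1) = 0 := by rw [map_sub, h1, map_one, sub_self]
      have h4 : f (((toM α) ^ m - 1) i j) = 0 := by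
        have := congrFun (congrFun (congrArg (fun M => (M : Matrix (Fin n) (Fin n) (ZMod p))) h3) i) j
        simpa [hφ, RingHom.mapMatrix_apply, Matrix.map_apply] using this
      obtain ⟨k, hk⟩ := ZMod.natCast_zmod_surjective (((toM α) ^ m - 1) i j)
      have h5 : (k : ZMod p) = 0 := by
        rw [← hk] at h4; simpa [hf] using h4
      obtain ⟨t, ht⟩ := (ZMod.natCast_eq_zero_iff k p).mp h5
      exact ⟨(t : R), by rw [← hk, ht]; push_cast; ring⟩
    choose B hB using fun i => h2 i
    set Bm : Matrix (Fin n) (Fin n) R := Matrix.of (fun i j => B i j) with hBm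
    have hB2 : (toM α) ^ m = 1 + (p : R) • Bm := by
      ext i j
      have := hB i j
      simp only [Matrix.sub_apply] at this
      simp [hBm, Matrix.add_apply, Matrix.smul_apply, smul_eq_mul]
      rw [← this]; ring
    -- the lifting-the-exponent computation
    have hpe : ((p : Polynomial R)) ^ e = 0 := by
      rw [← Nat.cast_pow]
      have : ((p ^ e : ℕ) : R) = 0 := ZMod.natCast_self _
      exact_mod_cast congrArg (Polynomial.C (R := R)) this |>.trans (map_zero _)
    have hpoly := aux_pow_pow p e hpe he (Polynomial.X (R := R))
    have h6 : ((1 : Matrix (Fin n) (Fin n) R) + (p : R) • Bm) ^ (p ^ (e - 1)) = 1 := by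
      have h7 := congrArg (Polynomial.aeval Bm) hpoly
      simp only [map_pow, map_add, map_one, map_mul, Polynomial.aeval_X, map_natCast] at h7
      rw [← h7]
      congr 2
      rw [Nat.cast_smul_eq_nsmul, nsmul_eq_mul]
    have h8 : (toM α) ^ (m * p ^ (e - 1)) = 1 := by
      rw [pow_mul, hB2, h6]
    have h9 : orderOf α ∣ m * p ^ (e - 1) := by
      rw [← orderOf_injective toM htoM α]
      exact orderOf_dvd_of_pow_eq_one h8
    refine le_trans (Nat.le_of_dvd (Nat.mul_pos hmpos (Nat.pow_pos hp.pos)) h9) ?_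
    rw [mul_comm]
    exact Nat.mul_le_mul_left _ (by omega)
  refine ⟨main, ?_⟩
  intro hn2 he2 α
  have hopos : 0 < addOrderOf α := by
    rw [← orderOf_ofAdd_eq_addOrderOf, ← orderOf_injective toM htoM (Multiplicative.ofAdd α),
      show toM (Multiplicative.ofAdd α) = ((toM.toHomUnits (Multiplicative.ofAdd α) :
        (Matrix (Fin n) (Fin n) R)ˣ) :
        Matrix (Fin n) (Fin n) R) from rfl, orderOf_units]
    exact orderOf_pos _
  have hmax : maxCycleLen (α : (Fin n → ZMod (p ^ e)) → (Fin n → ZMod (p ^ e))) ≤ addOrderOf α := by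
    apply csSup_le (Set.range_nonempty _)
    rintro _ ⟨x, rfl⟩
    have hper : Function.IsPeriodicPt (⇑α) (addOrderOf α) x := by
      show (⇑α)^[addOrderOf α] x = x
      have h1 : ∀ k : ℕ, ⇑(k • α) = (⇑α)^[k] := by
        intro k
        induction k with
        | zero => rfl
        | succ k ih =>
          funext y
          rw [succ_nsmul, AddAut.add_apply, Function.iterate_succ_apply, ← ih]
      rw [← h1, addOrderOf_nsmul_eq_zero]; rfl
    exact Nat.le_of_dvd hopos hper.minimalPeriod_dvd
  have hcard : Nat.card (Fin n → ZMod (p ^ e)) = (p ^ e) ^ n := by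
    rw [Nat.card_fun]
    simp [Nat.card_eq_fintype_card, ZMod.card]
  have hnat : 2 * (p ^ (e - 1) * (p ^ n - 1)) < (p ^ e) ^ n := by
    have hppos : 0 < p ^ (e - 1) := Nat.pow_pos hp.pos
    have hpn : 0 < p ^ n := Nat.pow_pos hp.pos
    have h1 : p ^ (e - 1) * (p ^ n - 1) < p ^ (e - 1) * p ^ n :=
      mul_lt_mul_of_pos_left (by omega) hppos
    have h2 : 2 * (p ^ (e - 1) * p ^ n) ≤ p * (p ^ (e - 1) * p ^ n) :=
      Nat.mul_le_mul_right _ hp.two_le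
    have h3 : p * (p ^ (e - 1) * p ^ n) = p ^ (e + n) := by
      rw [← mul_assoc, ← pow_succ', ← pow_add]
      congr 1
      omega
    have h4 : e + n ≤ e * n := by nlinarith
    have h5 : p ^ (e + n) ≤ p ^ (e * n) := Nat.pow_le_pow_right hp.pos h4
    have h6 : (p ^ e) ^ n = p ^ (e * n) := by rw [← pow_mul]
    omega
  have hle := le_trans hmax (main α)
  rw [hcard]
  have hcpos : (0 : ℚ) < ((p ^ e) ^ n : ℕ) := by
    exact_mod_cast pow_pos (pow_pos hp.pos e) n
  rw [div_lt_div_iff₀ hcpos (by norm_num)]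
  have : (maxCycleLen (α : (Fin n → ZMod (p ^ e)) → (Fin n → ZMod (p ^ e))) : ℚ) ≤
      (p ^ (e - 1) * (p ^ n - 1) : ℕ) := by exact_mod_cast hle
  calc (maxCycleLen (α : (Fin n → ZMod (p ^ e)) → (Fin n → ZMod (p ^ e))) : ℚ) * 2
      ≤ ((p ^ (e - 1) * (p ^ n - 1) : ℕ) : ℚ) * 2 := by linarith
    _ < ((p ^ e) ^ n : ℕ) := by
        exact_mod_cast (by omega : p ^ (e - 1) * (p ^ n - 1) * 2 < (p ^ e) ^ n)
    _ = 1 * ((p ^ e) ^ n : ℕ) := (one_mul _).symm
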